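/- arXiv:1911.01687 — 2 statements merged into one kernel-verified Lean document; each statement's English description precedes it below -/
import Mathlib

section
/- Let k ≥ 1 and let Γ: {0,1}* → ℕ* be the map sending a word w = 0^{x_0} 1 0^{x_1} 1 ⋯ 0^{x_n} 1 0^{x_{n+1}} to the word x_1 x_2 ⋯ x_n recording the lengths of zero-blocks between consecutive 1's. Let σ_k: 0 → 0^k 1, 1 → 0^{k+1} and τ_k: 1 → 1^{k-1}2, 2 → 1^{k-1}2·1^{k+1}, and let ρ_2 be the letter-coding 1 → k, 2 → 2k+1. Then for all n ≥ 1 and j ≥ 1, Γ((σ_k^n(0))^j · σ_k(0)) = (ρ_2(τ_k^{n-1}(1)))^j. -/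
/-- `Γ` maps a binary word `0^{x_0}1 0^{x_1}1 ⋯ 0^{x_n}1 0^{x_{n+1}}` to the word
`x_1 x_2 ⋯ x_n` of lengths of zero-blocks between consecutive 1's. -/
def gaps (w : List ℕ) : List ℕ := (((w.splitOn 1).drop 1).dropLast).map List.length

/-- The morphism `τ_k : 1 ↦ 1^{k-1}2, 2 ↦ 1^{k-1}2·1^{k+1}`. -/
def tauk (k : ℕ) : List ℕ → List ℕ := fun w =>
  w.flatMap fun c =>
    if c = 1 then List.replicate (k - 1) 1 ++ [2]
    else List.replicate (k - 1) 1 ++ [2] ++ List.replicate (k + 1) 1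

/-- The morphism `σ_k : 0 ↦ 0^k 1, 1 ↦ 0^{k+1}`. -/
def sigmak (k : ℕ) : List ℕ → List ℕ := fun w =>
  w.flatMap fun c =>
    if c = 0 then List.replicate k 0 ++ [1] else List.replicate (k + 1) 0

/-- The letter-to-letter coding `ρ_2 : 1 ↦ k, 2 ↦ 2k+1`. -/
def rho2 (k : ℕ) : List ℕ → List ℕ := fun w =>
  w.map fun c => if c = 1 then k else 2 * k + 1

/-- encode a gap word into a binary word -/
def enc (u : List ℕ) : List ℕ := u.flatMap fun x => List.replicate x 0 ++ [1]

def pmap' (k : ℕ) (u : List ℕ) : List ℕ :=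
  u.flatMap fun x => List.replicate (x - 1) k ++ [2 * k + 1]

@[simp] lemma enc_nil : enc [] = [] := rfl
@[simp] lemma enc_cons (x : ℕ) (u : List ℕ) :
    enc (x :: u) = List.replicate x 0 ++ [1] ++ enc u := by
  simp [enc]
@[simp] lemma enc_append (u v : List ℕ) : enc (u ++ v) = enc u ++ enc v := by
  simp [enc]

lemma gaps_enc (c : ℕ) (u : List ℕ) : gaps (enc (c :: u)) = u := by
  have key : ∀ u : List ℕ, (enc u).splitOn 1 = (u.map fun x => List.replicate x 0) ++ [[]] := by
    intro u
    induction u with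
    | nil => simp [enc, List.splitOn, List.splitOnP_nil]
    | cons x t ih =>
      rw [enc_cons, List.append_assoc]
      show List.splitOn 1 (List.replicate x 0 ++ 1 :: enc t) = _
      rw [List.splitOn, List.splitOnP_first]
      · simpa [List.splitOn] using congrArg (List.replicate x 0 :: ·) ih
      · intro y hy; simp [List.eq_of_mem_replicate hy]
      · simp
  rw [gaps, key]
  simp only [List.map_cons, List.cons_append, List.drop_succ_cons, List.drop_zero,
    List.dropLast_concat, List.map_map]
  conv_rhs => rw [← List.map_id u]
  exact List.map_congr_left fun x _ => by simp

@[simp] lemma sigmak_append (k : ℕ) (a b : List ℕ) :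
    sigmak k (a ++ b) = sigmak k a ++ sigmak k b := by simp [sigmak]
@[simp] lemma tauk_append (k : ℕ) (a b : List ℕ) :
    tauk k (a ++ b) = tauk k a ++ tauk k b := by simp [tauk]
@[simp] lemma rho2_append (k : ℕ) (a b : List ℕ) :
    rho2 k (a ++ b) = rho2 k a ++ rho2 k b := by simp [rho2]
@[simp] lemma pmap'_append (k : ℕ) (a b : List ℕ) :
    pmap' k (a ++ b) = pmap' k a ++ pmap' k b := by simp [pmap']

lemma sigmak_zero (k : ℕ) : sigmak k [0] = List.replicate k 0 ++ [1] := by simp [sigmak]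
lemma sigmak_one (k : ℕ) : sigmak k [1] = List.replicate (k + 1) 0 := by simp [sigmak]

lemma sigmak_rep_zero (k x : ℕ) :
    sigmak k (List.replicate x 0) = enc (List.replicate x k) := by
  induction x with
  | zero => rfl
  | succ m ih =>
    rw [List.replicate_succ, List.replicate_succ,
      show (0 : ℕ) :: List.replicate m 0 = [0] ++ List.replicate m 0 from rfl,
      show (k : ℕ) :: List.replicate m k = [k] ++ List.replicate m k from rfl,
      sigmak_append, ih, enc_append]
    simp [sigmak, enc]

/-- Key lemma: σ acting on encoded gap words. -/
lemma sigmak_enc (k : ℕ) (hk : 1 ≤ k) (u : List ℕ) (hu : ∀ x ∈ u, 1 ≤ x) :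
    sigmak k (enc u) ++ (List.replicate k 0 ++ [1]) = enc (k :: pmap' k u) := by
  induction u using List.reverseRecOn with
  | nil => simp [sigmak, pmap', enc]
  | append_singleton u x ih =>
    have hx : 1 ≤ x := hu x (by simp)
    have ih' := ih fun y hy => hu y (by simp [hy])
    rw [enc_append, sigmak_append]
    have h1 : sigmak k (enc [x]) = enc (List.replicate x k) ++ List.replicate (k + 1) 0 := by
      rw [show enc [x] = List.replicate x 0 ++ [1] by simp [enc], sigmak_append,
        sigmak_rep_zero, sigmak_one]
    have h2 : List.replicate x k = k :: List.replicate (x - 1) k := by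
      rw [← List.replicate_succ]; congr 1; omega
    have h3 : List.replicate (k + 1) (0:ℕ) ++ (List.replicate k 0 ++ [1]) =
        enc [2 * k + 1] := by
      rw [show enc [2*k+1] = List.replicate (2*k+1) 0 ++ [1] by simp [enc],
        ← List.append_assoc, ← List.replicate_add]
      congr 2; omega
    calc sigmak k (enc u) ++ sigmak k (enc [x]) ++ (List.replicate k 0 ++ [1])
        = sigmak k (enc u) ++ (enc (List.replicate x k) ++
            (List.replicate (k + 1) 0 ++ (List.replicate k 0 ++ [1]))) := by
          rw [h1]; simp [List.append_assoc]
      _ = sigmak k (enc u) ++ ((List.replicate k 0 ++ [1]) ++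
            (enc (List.replicate (x - 1) k) ++ enc [2 * k + 1])) := by
          rw [h3, h2]
          simp [enc, List.append_assoc]
      _ = enc (k :: pmap' k u) ++ enc (List.replicate (x - 1) k ++ [2 * k + 1]) := by
          rw [← List.append_assoc, ih', enc_append]
      _ = enc (k :: pmap' k (u ++ [x])) := by
          rw [pmap'_append, show pmap' k [x] = List.replicate (x-1) k ++ [2*k+1] by
            simp [pmap']]
          simp

/-- the word `c_k = k^{k-1}(2k+1)` -/
def ck (k : ℕ) : List ℕ := List.replicate (k - 1) k ++ [2 * k + 1]

lemma rho2_tau_one (k : ℕ) : rho2 k (tauk k [1]) = ck k := by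
  simp [tauk, rho2, ck, List.map_replicate]

lemma rho2_tau_two (k : ℕ) (hk : 1 ≤ k) :
    rho2 k (tauk k [2]) = ck k ++ List.replicate (k + 1) k := by
  have : (2 : ℕ) ≠ 1 := by norm_num
  simp [tauk, rho2, ck, List.map_replicate, this]

lemma letters_tauk (k : ℕ) (w : List ℕ) :
    ∀ c ∈ tauk k w, c = 1 ∨ c = 2 := by
  intro c hc
  simp only [tauk, List.mem_flatMap] at hc
  obtain ⟨a, -, hc⟩ := hc
  by_cases h : a = 1 <;>
    simp only [h, if_true, if_neg, List.mem_append, List.mem_replicate,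
      List.mem_singleton, reduceCtorEq, if_false] at hc <;> omega

lemma letters_tauk_iter (k m : ℕ) : ∀ c ∈ (tauk k)^[m] [1], c = 1 ∨ c = 2 := by
  cases m with
  | zero => intro c hc; simp at hc; left; exact hc
  | succ m =>
    rw [Function.iterate_succ_apply']
    exact letters_tauk k _

lemma letters_rho2 (k : ℕ) (hk : 1 ≤ k) (w : List ℕ) : ∀ x ∈ rho2 k w, 1 ≤ x := by
  intro x hx
  simp only [rho2, List.mem_map] at hx
  obtain ⟨c, -, hx⟩ := hx
  by_cases h : c = 1 <;> simp [h] at hx <;> omega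

/-- Commuting lemma: `ρ₂∘τ` and `pmap'∘ρ₂` agree up to conjugation by `c_k`. -/
lemma comm_lemma (k : ℕ) (hk : 1 ≤ k) (w : List ℕ) (hw : ∀ c ∈ w, c = 1 ∨ c = 2) :
    rho2 k (tauk k w) ++ ck k = ck k ++ pmap' k (rho2 k w) := by
  induction w using List.reverseRecOn with
  | nil => simp [tauk, rho2, pmap']
  | append_singleton w a ih =>
    have ih' := ih fun c hc => hw c (by simp [hc])
    have hletter : rho2 k (tauk k [a]) ++ ck k = ck k ++ pmap' k (rho2 k [a]) := by
      rcases hw a (by simp) with rfl | rfl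
      · rw [rho2_tau_one]
        have : pmap' k (rho2 k [1]) = ck k := by simp [rho2, pmap', ck]
        rw [this]
      · rw [rho2_tau_two k hk]
        have h2 : pmap' k (rho2 k [2]) = List.replicate (2 * k) k ++ [2 * k + 1] := by
          have : (2 : ℕ) ≠ 1 := by norm_num
          simp [rho2, pmap', this]
        have h3 : List.replicate (2 * k) k
            = List.replicate (k + 1) k ++ List.replicate (k - 1) k := by
          rw [← List.replicate_add]; congr 1; omega
        rw [h2, h3, ck]; simp [List.replicate_add, List.append_assoc]
    calc rho2 k (tauk k (w ++ [a])) ++ ck k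
        = rho2 k (tauk k w) ++ (rho2 k (tauk k [a]) ++ ck k) := by
          rw [tauk_append, rho2_append]; simp [List.append_assoc]
      _ = (rho2 k (tauk k w) ++ ck k) ++ pmap' k (rho2 k [a]) := by
          rw [hletter]; simp [List.append_assoc]
      _ = ck k ++ (pmap' k (rho2 k w) ++ pmap' k (rho2 k [a])) := by
          rw [ih']; simp [List.append_assoc]
      _ = ck k ++ pmap' k (rho2 k (w ++ [a])) := by
          rw [rho2_append, pmap'_append]
lemma pmap'_cons_k (k : ℕ) (hk : 1 ≤ k) (v : List ℕ) :
    pmap' k (k :: v) = ck k ++ pmap' k v := by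
  show pmap' k ([k] ++ v) = _
  rw [pmap'_append]; congr 1; simp [pmap', ck]

/-- Main structural lemma. -/
lemma main_lemma (k : ℕ) (hk : 1 ≤ k) (m : ℕ) :
    (sigmak k)^[m + 1] [0] ++ (List.replicate k 0 ++ [1]) =
      enc (k :: rho2 k ((tauk k)^[m] [1])) := by
  induction m with
  | zero =>
    simp [sigmak, rho2, enc, List.append_assoc]
  | succ m ih =>
    set v := rho2 k ((tauk k)^[m] [1]) with hv
    have hlet : ∀ x ∈ (k :: v), 1 ≤ x := by
      intro x hx
      rcases List.mem_cons.mp hx with rfl | hx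
      · exact hk
      · exact letters_rho2 k hk _ x hx
    have hcomm : rho2 k ((tauk k)^[m + 1] [1]) ++ ck k = ck k ++ pmap' k v := by
      rw [Function.iterate_succ_apply']
      exact comm_lemma k hk _ (letters_tauk_iter k m)
    have hL : sigmak k (enc (k :: v)) ++ (List.replicate k 0 ++ [1]) =
        enc (k :: pmap' k (k :: v)) := sigmak_enc k hk _ hlet
    have step : sigmak k ((sigmak k)^[m + 1] [0] ++ (List.replicate k 0 ++ [1])) =
        (sigmak k)^[m + 2] [0] ++ (enc (List.replicate k k) ++ List.replicate (k + 1) 0) := by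
      rw [sigmak_append, ← Function.iterate_succ_apply' (sigmak k), sigmak_append,
        sigmak_rep_zero, sigmak_one]
    have key : (sigmak k)^[m + 2] [0] ++ (enc (List.replicate k k) ++ List.replicate (k + 1) 0)
        ++ (List.replicate k 0 ++ [1])
        = enc (k :: rho2 k ((tauk k)^[m + 1] [1])) ++ enc (ck k) := by
      rw [← step, ih, hL, pmap'_cons_k k hk, ← hcomm,
        show (k : ℕ) :: (rho2 k ((tauk k)^[m + 1] [1]) ++ ck k)
          = (k :: rho2 k ((tauk k)^[m + 1] [1])) ++ ck k from rfl, enc_append]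
    -- rewrite LHS of key
    have expand : enc (List.replicate k k) ++ List.replicate (k + 1) 0
        ++ (List.replicate k 0 ++ [1])
        = (List.replicate k 0 ++ [1]) ++ enc (ck k) := by
      have h2 : List.replicate k k = k :: List.replicate (k - 1) k := by
        rw [← List.replicate_succ]; congr 1; omega
      have h3 : List.replicate (k + 1) (0:ℕ) ++ (List.replicate k 0 ++ [1]) =
          List.replicate (2 * k + 1) 0 ++ [1] := by
        rw [← List.append_assoc, ← List.replicate_add]; congr 2; omega
      have h2' : enc (List.replicate k k)
          = (List.replicate k 0 ++ [1]) ++ enc (List.replicate (k - 1) k) := by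
        rw [h2]; simp [enc]
      have h4 : enc (ck k)
          = enc (List.replicate (k - 1) k) ++ (List.replicate (2 * k + 1) 0 ++ [1]) := by
        rw [ck, enc_append]; simp [enc]
      rw [h2', h4]
      simp only [List.append_assoc]
      rw [h3]
    apply List.append_cancel_right (bs := enc (ck k))
    rw [← key]
    simp only [List.append_assoc] at expand ⊢
    rw [expand]

lemma power_lemma (k : ℕ) (hk : 1 ≤ k) (w v : List ℕ)
    (h : w ++ (List.replicate k 0 ++ [1]) = enc (k :: v)) (j : ℕ) :
    (List.replicate j w).flatten ++ (List.replicate k 0 ++ [1]) =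
      enc (k :: (List.replicate j v).flatten) := by
  induction j with
  | zero => simp [enc]
  | succ j ih =>
    rw [List.replicate_succ, List.flatten_cons, List.replicate_succ, List.flatten_cons]
    calc w ++ (List.replicate j w).flatten ++ (List.replicate k 0 ++ [1])
        = w ++ ((List.replicate j w).flatten ++ (List.replicate k 0 ++ [1])) := by simp
      _ = w ++ (List.replicate k 0 ++ [1] ++ enc ((List.replicate j v).flatten)) := by
          rw [ih, enc_cons]
      _ = (w ++ (List.replicate k 0 ++ [1])) ++ enc ((List.replicate j v).flatten) := by simp
      _ = enc (k :: v) ++ enc ((List.replicate j v).flatten) := by rw [h]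
      _ = enc (k :: (v ++ (List.replicate j v).flatten)) := by
          rw [enc_cons, enc_cons, enc_append]; simp

theorem stmt_9 (k : ℕ) (hk : 1 ≤ k) (n j : ℕ) (hn : 1 ≤ n) (hj : 1 ≤ j) :
    gaps ((List.replicate j ((sigmak k)^[n] [0])).flatten ++ sigmak k [0]) =
      (List.replicate j (rho2 k ((tauk k)^[n - 1] [1]))).flatten := by
  obtain ⟨m, rfl⟩ : ∃ m, n = m + 1 := ⟨n - 1, by omega⟩
  rw [sigmak_zero, power_lemma k hk _ _ (by simpa using main_lemma k hk m) j]
  exact gaps_enc k _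
end

section
/- Let k ≥ 1 and W_k(n) = ((k+1)^n - (-1)^n)/(k+2). Then every positive integer admits at most one valid W-expansion n = Σ_{j=1}^r x_j W_k(j), where validity means x_j ∈ {0,...,k}, x_r ≠ 0, and the digit word x_r ⋯ x_1 ends with an even number (possibly zero) of digits equal to k. -/
def W (k : ℤ) (n : ℕ) : ℤ := ((k + 1) ^ n - (-1) ^ n) / (k + 2)

/-- `x = [x_1, x_2, …, x_r]` (least significant digit first) is a valid `W`-expansion digit
word: nonempty, digits in `[0,k]`, leading digit `x_r ≠ 0`, and the word `x_r x_{r-1} ⋯ x_1`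
ends with an even number (possibly zero) of digits equal to `k`. -/
def ValidW (k : ℕ) (x : List ℕ) : Prop :=
  x ≠ [] ∧ (∀ d ∈ x, d ≤ k) ∧ x.getLastD 0 ≠ 0 ∧
    Even ((x.takeWhile fun d => d = k).length)

/-- The value `Σ_{j=1}^r x_j W_k(j)` of a digit word `x = [x_1, …, x_r]`. -/
def valW (k : ℕ) (x : List ℕ) : ℤ :=
  ∑ i ∈ Finset.range x.length, (x.getD i 0 : ℤ) * W k (i + 1)


lemma Wkey (k : ℕ) (n : ℕ) : ((k : ℤ) + 2) * W k n = ((k : ℤ) + 1) ^ n - (-1) ^ n := by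
  have h : ((k : ℤ) + 2) ∣ ((k : ℤ) + 1) ^ n - (-1) ^ n := by
    have := sub_dvd_pow_sub_pow ((k : ℤ) + 1) (-1) n
    have e : ((k : ℤ) + 1) - (-1) = (k : ℤ) + 2 := by ring
    rwa [e] at this
  rw [W]
  exact Int.mul_ediv_cancel' h

lemma negpow (m : ℕ) : ((-1 : ℤ)) ^ m = 1 ∨ ((-1 : ℤ)) ^ m = -1 := by
  rcases Nat.even_or_odd m with h | h
  · exact Or.inl h.neg_one_pow
  · exact Or.inr h.neg_one_pow

lemma Wpos (k : ℕ) (hk : 1 ≤ k) (n : ℕ) (hn : 1 ≤ n) : 1 ≤ W k n := by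
  have hkey := Wkey k n
  have h2 : (2 : ℤ) ≤ (k : ℤ) + 1 := by exact_mod_cast Nat.succ_le_succ hk
  have hp : (2 : ℤ) ^ n ≤ ((k : ℤ) + 1) ^ n := pow_le_pow_left₀ (by norm_num) h2 n
  have hp2 : (2 : ℤ) ≤ 2 ^ n := by
    calc (2:ℤ) = 2 ^ 1 := by norm_num
    _ ≤ 2 ^ n := pow_le_pow_right₀ (by norm_num) hn
  rcases negpow n with h | h <;> nlinarith [hkey]

lemma Wnonneg (k : ℕ) (hk : 1 ≤ k) (n : ℕ) : 0 ≤ W k n := by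
  cases n with
  | zero => simp [W]
  | succ m => linarith [Wpos k hk (m+1) (Nat.succ_le_succ (Nat.zero_le m))]

lemma Wmono (k : ℕ) (hk : 1 ≤ k) (n : ℕ) : W k n ≤ W k (n + 1) := by
  have h1 := Wkey k n
  have h2 := Wkey k (n + 1)
  have hps : ((k:ℤ)+1) ^ (n+1) = ((k:ℤ)+1)^n * ((k:ℤ)+1) := pow_succ _ _
  have hns : ((-1:ℤ)) ^ (n+1) = -((-1:ℤ))^n := by rw [pow_succ]; ring
  have h2' : (2 : ℤ) ≤ (k : ℤ) + 1 := by exact_mod_cast Nat.succ_le_succ hk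
  rcases Nat.even_or_odd n with h | h
  · have := h.neg_one_pow (α := ℤ)
    have hpn : (1:ℤ) ≤ ((k:ℤ)+1)^n := one_le_pow₀ (by linarith)
    nlinarith
  · have := h.neg_one_pow (α := ℤ)
    have hn1 : 1 ≤ n := h.pos
    have hp : (2 : ℤ) ^ n ≤ ((k : ℤ) + 1) ^ n := pow_le_pow_left₀ (by norm_num) h2' n
    have hp2 : (2 : ℤ) ≤ 2 ^ n := by
      calc (2:ℤ) = 2 ^ 1 := by norm_num
      _ ≤ 2 ^ n := pow_le_pow_right₀ (by norm_num) hn1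
    nlinarith

lemma Wle (k : ℕ) (hk : 1 ≤ k) : Monotone (W k) :=
  monotone_nat_of_le_succ (Wmono k hk)

lemma Wshift (k : ℕ) (n : ℕ) : ((k:ℤ) + 1) * W k n = W k (n + 1) + (-1) ^ (n + 1) := by
  have hne : ((k:ℤ) + 2) ≠ 0 := by positivity
  apply mul_left_cancel₀ hne
  have h1 := Wkey k n
  have h2 := Wkey k (n + 1)
  have hps : ((k:ℤ)+1) ^ (n+1) = ((k:ℤ)+1)^n * ((k:ℤ)+1) := pow_succ _ _
  have hns : ((-1:ℤ)) ^ (n+1) = -((-1:ℤ))^n := by rw [pow_succ]; ring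
  nlinarith [h1, h2]

lemma W1 (k : ℕ) : W k 1 = 1 := by
  have hne : ((k:ℤ) + 2) ≠ 0 := by positivity
  apply mul_left_cancel₀ hne
  have := Wkey k 1
  simp at this; linarith

def SW (k : ℕ) (m : ℕ) : ℤ := ∑ i ∈ Finset.range m, W k (i + 1)

lemma kSW (k : ℕ) (m : ℕ) : 2 * ((k:ℤ) * SW k m) = 2 * W k (m + 1) - 1 - (-1) ^ m := by
  induction m with
  | zero => simp [SW, W1]
  | succ m ih =>
    have hs : SW k (m + 1) = SW k m + W k (m + 1) := Finset.sum_range_succ _ _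
    have hshift := Wshift k (m + 1)
    have hns : ((-1:ℤ)) ^ (m+1) = -((-1:ℤ))^m := by rw [pow_succ]; ring
    have hns2 : ((-1:ℤ)) ^ (m+2) = ((-1:ℤ))^m := by rw [pow_succ, pow_succ]; ring
    rw [hs]
    rw [hns2] at hshift
    rw [hns]
    nlinarith [ih, hshift]


lemma getD_le (k : ℕ) (x : List ℕ) (hd : ∀ d ∈ x, d ≤ k) (i : ℕ) (hi : i < x.length) :
    x.getD i 0 ≤ k := by
  rw [List.getD_eq_getElem x 0 hi]
  exact hd _ (List.getElem_mem hi)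

lemma valW_nonneg (k : ℕ) (hk : 1 ≤ k) (x : List ℕ) : 0 ≤ valW k x := by
  apply Finset.sum_nonneg
  intro i _
  exact mul_nonneg (by positivity) (Wnonneg k hk (i + 1))

lemma kSW_sub_valW (k : ℕ) (x : List ℕ) :
    (k : ℤ) * SW k x.length - valW k x
      = ∑ i ∈ Finset.range x.length, ((k : ℤ) - x.getD i 0) * W k (i + 1) := by
  rw [valW, SW, Finset.mul_sum, ← Finset.sum_sub_distrib]
  apply Finset.sum_congr rfl
  intro i _
  ring

lemma valW_le_kSW (k : ℕ) (hk : 1 ≤ k) (x : List ℕ) (hd : ∀ d ∈ x, d ≤ k) :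
    valW k x ≤ (k : ℤ) * SW k x.length := by
  have h := kSW_sub_valW k x
  have hnn : 0 ≤ ∑ i ∈ Finset.range x.length, ((k : ℤ) - x.getD i 0) * W k (i + 1) := by
    apply Finset.sum_nonneg
    intro i hi
    apply mul_nonneg _ (Wnonneg k hk (i + 1))
    have := getD_le k x hd i (Finset.mem_range.mp hi)
    have : ((x.getD i 0 : ℤ)) ≤ k := by exact_mod_cast this
    linarith
  linarith

/-- if some digit is < k, value is at least W(i+1) below k·S -/
lemma valW_lt_kSW (k : ℕ) (hk : 1 ≤ k) (x : List ℕ) (hd : ∀ d ∈ x, d ≤ k)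
    (i : ℕ) (hi : i < x.length) (hik : x.getD i 0 ≠ k) :
    valW k x + W k (i + 1) ≤ (k : ℤ) * SW k x.length := by
  have h := kSW_sub_valW k x
  have hsingle : ((k : ℤ) - x.getD i 0) * W k (i + 1)
      ≤ ∑ j ∈ Finset.range x.length, ((k : ℤ) - x.getD j 0) * W k (j + 1) := by
    apply Finset.single_le_sum (f := fun j => ((k : ℤ) - x.getD j 0) * W k (j + 1))
    · intro j hj
      apply mul_nonneg _ (Wnonneg k hk (j + 1))
      have := getD_le k x hd j (Finset.mem_range.mp hj)
      have : ((x.getD j 0 : ℤ)) ≤ k := by exact_mod_cast this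
      linarith
    · exact Finset.mem_range.mpr hi
  have hlt : x.getD i 0 < k := lt_of_le_of_ne (getD_le k x hd i hi) hik
  have hlt' : (x.getD i 0 : ℤ) + 1 ≤ k := by exact_mod_cast hlt
  have hW := Wnonneg k hk (i + 1)
  nlinarith [hsingle, h]

lemma valW_all_k (k : ℕ) (x : List ℕ) (hall : ∀ d ∈ x, d = k) :
    valW k x = (k : ℤ) * SW k x.length := by
  rw [valW, SW, Finset.mul_sum]
  apply Finset.sum_congr rfl
  intro i hi
  have hi' := Finset.mem_range.mp hi
  rw [List.getD_eq_getElem x 0 hi', hall _ (List.getElem_mem hi')]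

lemma run_eq_len (k : ℕ) (x : List ℕ) (hall : ∀ d ∈ x, d = k) :
    (x.takeWhile fun d => d = k).length = x.length := by
  rw [List.takeWhile_eq_self_iff.mpr (by intro d hd; simpa using hall d hd)]

lemma claimA (k : ℕ) (hk : 1 ≤ k) (x : List ℕ) (hd : ∀ d ∈ x, d ≤ k)
    (hev : Even ((x.takeWhile fun d => d = k).length)) :
    valW k x ≤ W k (x.length + 1) - 1 := by
  have hks := kSW k x.length
  by_cases hall : ∀ d ∈ x, d = k
  · have hE : Even x.length := by rwa [run_eq_len k x hall] at hev
    have h1 : ((-1 : ℤ)) ^ x.length = 1 := hE.neg_one_pow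
    rw [valW_all_k k x hall]
    rw [h1] at hks
    linarith
  · push_neg at hall
    obtain ⟨d, hdx, hdk⟩ := hall
    obtain ⟨i, hi, hgi⟩ := List.getElem_of_mem hdx
    have hik : x.getD i 0 ≠ k := by rw [List.getD_eq_getElem x 0 hi, hgi]; exact hdk
    have h1 := valW_lt_kSW k hk x hd i hi hik
    have h2 := Wpos k hk (i + 1) (Nat.succ_le_succ (Nat.zero_le i))
    rcases negpow x.length with h | h <;> rw [h] at hks <;> linarith

lemma valW_append (k : ℕ) (l : List ℕ) (d : ℕ) :
    valW k (l ++ [d]) = valW k l + (d : ℤ) * W k (l.length + 1) := by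
  rw [valW, valW]
  have hlen : (l ++ [d]).length = l.length + 1 := by simp
  rw [hlen, Finset.sum_range_succ]
  congr 1
  · apply Finset.sum_congr rfl
    intro i hi
    rw [List.getD_append _ _ _ _ (Finset.mem_range.mp hi)]
  · rw [List.getD_append_right _ _ _ _ (le_refl _)]
    simp

lemma valW_ge (k : ℕ) (hk : 1 ≤ k) (x : List ℕ) (hne : x ≠ [])
    (hlast : x.getLastD 0 ≠ 0) : W k x.length ≤ valW k x := by
  obtain ⟨l, d, rfl⟩ : ∃ l d, x = l ++ [d] :=
    ⟨x.dropLast, x.getLast hne, (List.dropLast_append_getLast hne).symm⟩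
  have hd1 : 1 ≤ d := by
    have := hlast
    rw [List.getLastD_concat] at this
    omega
  have hd1' : (1 : ℤ) ≤ (d : ℤ) := by exact_mod_cast hd1
  rw [valW_append]
  have h0 := valW_nonneg k hk l
  have hW := Wpos k hk (l.length + 1) (Nat.succ_le_succ (Nat.zero_le _))
  have hlen : (l ++ [d]).length = l.length + 1 := by simp
  rw [hlen]
  nlinarith

lemma run_concat (k : ℕ) (l : List ℕ) (a : ℕ)
    (hnall : ¬ ∀ d ∈ l ++ [a], d = k)
    (hev : Even (((l ++ [a]).takeWhile fun d => d = k).length)) :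
    Even ((l.takeWhile fun d => d = k).length) := by
  rw [List.takeWhile_append] at hev
  split at hev
  · rename_i h
    have hself : (l.takeWhile fun d => d = k) = l :=
      (List.takeWhile_prefix _).eq_of_length h
    have halll : ∀ d ∈ l, d = k := by
      intro d hd
      have := List.takeWhile_eq_self_iff.mp hself d hd
      simpa using this
    have hak : a ≠ k := by
      intro hc
      exact hnall (by intro d hd; rcases List.mem_append.mp hd with h' | h'
                      · exact halll d h'
                      · simp at h'; omega)
    have : (([a] : List ℕ).takeWhile fun d => d = k) = [] := by
      simp [List.takeWhile_cons, hak]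
    rw [this] at hev
    simp at hev
    rw [hself]
    simpa using hev
  · exact hev

lemma uniq_len (k : ℕ) (hk : 1 ≤ k) (m : ℕ) : ∀ x y : List ℕ,
    x.length = m → y.length = m → (∀ d ∈ x, d ≤ k) → (∀ d ∈ y, d ≤ k) →
    Even ((x.takeWhile fun d => d = k).length) →
    Even ((y.takeWhile fun d => d = k).length) →
    valW k x = valW k y → x = y := by
  induction m with
  | zero =>
    intro x y hlx hly _ _ _ _ _
    rw [List.length_eq_zero_iff.mp hlx, List.length_eq_zero_iff.mp hly]
  | succ m ih =>
    intro x y hlx hly hdx hdy hex hey hval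
    have key_allk : ∀ u v : List ℕ, u.length = m + 1 → v.length = m + 1 →
        (∀ d ∈ v, d ≤ k) → (∀ d ∈ u, d = k) → ¬ (∀ d ∈ v, d = k) →
        valW k u = valW k v → False := by
      intro u v hlu hlv hdv hau hav huv
      push_neg at hav
      obtain ⟨d, hdv', hdk⟩ := hav
      obtain ⟨i, hi, hgi⟩ := List.getElem_of_mem hdv'
      have hik : v.getD i 0 ≠ k := by rw [List.getD_eq_getElem v 0 hi, hgi]; exact hdk
      have h1 := valW_lt_kSW k hk v hdv i hi hik
      have h2 := Wpos k hk (i + 1) (Nat.succ_le_succ (Nat.zero_le i))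
      have h3 := valW_all_k k u hau
      rw [hlu] at h3
      rw [hlv] at h1
      have h4 : valW k v = (k : ℤ) * SW k (m + 1) := by rw [← huv, h3]
      linarith
    by_cases hax : ∀ d ∈ x, d = k <;> by_cases hay : ∀ d ∈ y, d = k
    · rw [List.eq_replicate_iff.mpr ⟨hlx, hax⟩, List.eq_replicate_iff.mpr ⟨hly, hay⟩]
    · exact absurd (key_allk x y hlx hly hdy hax hay hval) not_false
    · exact absurd (key_allk y x hly hlx hdx hay hax hval.symm) not_false
    · have hnex : x ≠ [] := by intro h; rw [h] at hlx; simp at hlx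
      have hney : y ≠ [] := by intro h; rw [h] at hly; simp at hly
      obtain ⟨lx, dx, rfl⟩ : ∃ l d, x = l ++ [d] :=
        ⟨x.dropLast, x.getLast hnex, (List.dropLast_append_getLast hnex).symm⟩
      obtain ⟨ly, dy, rfl⟩ : ∃ l d, y = l ++ [d] :=
        ⟨y.dropLast, y.getLast hney, (List.dropLast_append_getLast hney).symm⟩
      have hllx : lx.length = m := by simp at hlx; omega
      have hlly : ly.length = m := by simp at hly; omega
      have hdlx : ∀ d ∈ lx, d ≤ k := fun d hd => hdx d (List.mem_append_left _ hd)
      have hdly : ∀ d ∈ ly, d ≤ k := fun d hd => hdy d (List.mem_append_left _ hd)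
      have hdxk : dx ≤ k := hdx dx (List.mem_append_right _ (by simp))
      have hdyk : dy ≤ k := hdy dy (List.mem_append_right _ (by simp))
      have helx := run_concat k lx dx hax hex
      have hely := run_concat k ly dy hay hey
      have hAx := claimA k hk lx hdlx helx
      have hAy := claimA k hk ly hdly hely
      have h0x := valW_nonneg k hk lx
      have h0y := valW_nonneg k hk ly
      rw [valW_append, valW_append, hllx, hlly] at hval
      rw [hllx] at hAx
      rw [hlly] at hAy
      have hW := Wpos k hk (m + 1) (Nat.succ_le_succ (Nat.zero_le m))
      have hde : dx = dy := by
        rcases lt_trichotomy dx dy with h | h | h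
        · have h' : (dx : ℤ) + 1 ≤ (dy : ℤ) := by exact_mod_cast h
          nlinarith
        · exact h
        · have h' : (dy : ℤ) + 1 ≤ (dx : ℤ) := by exact_mod_cast h
          nlinarith
      subst hde
      have hvale : valW k lx = valW k ly := by
        have : (dx : ℤ) * W k (m + 1) = (dx : ℤ) * W k (m + 1) := rfl
        linarith
      rw [ih lx ly hllx hlly hdlx hdly helx hely hvale]


theorem stmt_12 (k : ℕ) (hk : 1 ≤ k) (n : ℕ) (hn : 0 < n) (x y : List ℕ)
    (hx : ValidW k x) (hy : ValidW k y)
    (hxn : (n : ℤ) = valW k x) (hyn : (n : ℤ) = valW k y) : x = y := by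
  obtain ⟨hxne, hxd, hxl, hxe⟩ := hx
  obtain ⟨hyne, hyd, hyl, hye⟩ := hy
  have hxA := claimA k hk x hxd hxe
  have hyA := claimA k hk y hyd hye
  have hxG := valW_ge k hk x hxne hxl
  have hyG := valW_ge k hk y hyne hyl
  have hlen : x.length = y.length := by
    rcases lt_trichotomy x.length y.length with h | h | h
    · have hm : W k (x.length + 1) ≤ W k y.length := Wle k hk h
      linarith
    · exact h
    · have hm : W k (y.length + 1) ≤ W k x.length := Wle k hk h
      linarith
  exact uniq_len k hk x.length x y rfl hlen.symm hxd hyd hxe hye (by rw [← hxn, ← hyn])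
end
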